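/- Let r ≥ 1 and let (v_1,…,v_r) be a system of linear functionals on ℂ[x] whose moment matrix M admits a Gauss–Borel factorisation M = A·B. Then there is a unique infinite matrix H satisfying A H = Λ A entrywise, and this H also satisfies H B = B (Λᵀ)^r entrywise; moreover H is a banded unit-lower-Hessenberg matrix with r subdiagonals, i.e. H_{n,n+1} = 1, H_{n,ℓ} = 0 for ℓ > n+1 and for ℓ < n−r; and the monic polynomials P_n determined by x^n = Σ_{k=0}^{n} A_{n,k} P_k(x) and the type I linear forms q_n := Σ_{j=1}^{r} (Σ_{m} C_{rm+j−1,n} x^m)·v_j (C := B^{-1}) satisfy the recurrence relations x P_n(x) = P_{n+1}(x) + Σ_{ℓ=max(0,n−r)}^{n} H_{n,ℓ} P_ℓ(x) as an identity of polynomials, and x·q_k = q_{k−1} + Σ_{n=k}^{k+r} H_{n,k} q_n as an identity of linear functionals (with q_{−1} := 0). -/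

import Mathlib

open Polynomial Finset

noncomputable section

/-- A linear functional on `ℂ[x]`. -/
abbrev LF := Polynomial ℂ →ₗ[ℂ] ℂ

/-- The moment matrix of a system of `r` linear functionals (0-indexed:
`v j` is the paper's `v_{j+1}`): entry `(n, r*k+j)` is `⟨v_{j+1}, x^{k+n}⟩`. -/
def momentMatrix (r : ℕ) (v : ℕ → LF) (n ℓ : ℕ) : ℂ :=
  v (ℓ % r) (Polynomial.X ^ (ℓ / r + n))

/-- A Gauss–Borel factorisation `M = A·B` of the moment matrix. -/
structure GaussBorel (r : ℕ) (v : ℕ → LF) (A B : ℕ → ℕ → ℂ) : Prop where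
  A_diag : ∀ n, A n n = 1
  A_upper : ∀ n ℓ, n < ℓ → A n ℓ = 0
  B_lower : ∀ n ℓ, ℓ < n → B n ℓ = 0
  B_diag : ∀ n, B n n ≠ 0
  factor : ∀ n ℓ, momentMatrix r v n ℓ = ∑ k ∈ Finset.range (n + 1), A n k * B k ℓ

/-- The polynomial `C_{n,j+1}(x) = Σ_{m : r m + j ≤ n} C_{r m + j, n} x^m`. -/
def Cpoly (r : ℕ) (Cm : ℕ → ℕ → ℂ) (n j : ℕ) : Polynomial ℂ :=
  ∑ m ∈ (Finset.range (n + 1)).filter (fun m => r * m + j ≤ n),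
    Polynomial.C (Cm (r * m + j) n) * Polynomial.X ^ m

/-- The type I linear form `q_n = Σ_{j=1}^{r} C_{n,j}(x)·v_j`, as a function
on polynomials: `q_n(f) = Σ_{j<r} ⟨v_{j+1}, C_{n,j+1}(x)·f⟩`. -/
def qForm (r : ℕ) (v : ℕ → LF) (Cm : ℕ → ℕ → ℂ) (n : ℕ) (f : Polynomial ℂ) : ℂ :=
  ∑ j ∈ Finset.range r, v j (Cpoly r Cm n j * f)

/-- Generic "unit lower triangular kill" lemma. -/
lemma tri_kill (A : ℕ → ℕ → ℂ) (hd : ∀ n, A n n = 1) (F : ℕ → ℂ)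
    (h : ∀ n, ∑ k ∈ Finset.range (n + 1), A n k * F k = 0) : ∀ n, F n = 0 := by
  intro n
  induction n using Nat.strong_induction_on with
  | _ n ih =>
    have h1 := h n
    rw [Finset.sum_range_succ, hd n, one_mul] at h1
    have h2 : ∑ k ∈ Finset.range n, A n k * F k = 0 :=
      Finset.sum_eq_zero fun k hk => by rw [ih k (Finset.mem_range.mp hk), mul_zero]
    rw [h2, zero_add] at h1
    exact h1

/-- Explicit construction of `H` with `A H = Λ A`. -/
noncomputable def Hd (A : ℕ → ℕ → ℂ) : ℕ → ℕ → ℂ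
  | n => fun ℓ => A (n + 1) ℓ - ∑ k ∈ (Finset.range n).attach, A n k.1 * Hd A k.1 ℓ
termination_by n => n
decreasing_by exact Finset.mem_range.mp k.2

lemma Hd_spec (A : ℕ → ℕ → ℂ) (hd : ∀ n, A n n = 1) :
    ∀ n ℓ, ∑ k ∈ Finset.range (n + 1), A n k * Hd A k ℓ = A (n + 1) ℓ := by
  intro n ℓ
  rw [Finset.sum_range_succ, hd n, one_mul,
    show Hd A n ℓ = A (n + 1) ℓ - ∑ k ∈ (Finset.range n).attach, A n k.1 * Hd A k.1 ℓ from
      by rw [Hd],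
    Finset.sum_attach (Finset.range n) (fun k => A n k * Hd A k ℓ)]
  ring

theorem stmt2 (r : ℕ) (hr : 1 ≤ r) (v : ℕ → LF) (A B Cm : ℕ → ℕ → ℂ)
    (hGB : GaussBorel r v A B)
    (hCupper : ∀ k n, n < k → Cm k n = 0)
    (hCinv : ∀ ℓ n, ∑ k ∈ Finset.Icc ℓ n, B ℓ k * Cm k n = if ℓ = n then 1 else 0)
    (P : ℕ → Polynomial ℂ)
    (hP : ∀ n, (Polynomial.X : Polynomial ℂ) ^ n
      = ∑ k ∈ Finset.range (n + 1), Polynomial.C (A n k) * P k) :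
    -- there is a unique `H` with `A H = Λ A`
    (∃! H : ℕ → ℕ → ℂ,
      ∀ n ℓ, ∑ k ∈ Finset.range (n + 1), A n k * H k ℓ = A (n + 1) ℓ) ∧
    -- and any such `H` satisfies the asserted properties
    (∀ H : ℕ → ℕ → ℂ,
      (∀ n ℓ, ∑ k ∈ Finset.range (n + 1), A n k * H k ℓ = A (n + 1) ℓ) →
      -- `H B = B (Λᵀ)^r`
      ((∀ n ℓ, ∑ k ∈ Finset.range (ℓ + 1), H n k * B k ℓ = B n (ℓ + r)) ∧
       -- banded unit-lower-Hessenberg with `r` subdiagonals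
       (∀ n, H n (n + 1) = 1) ∧
       (∀ n ℓ, n + 1 < ℓ → H n ℓ = 0) ∧
       (∀ n ℓ, ℓ + r < n → H n ℓ = 0) ∧
       -- recurrence for the type II polynomials
       (∀ n, Polynomial.X * P n
          = P (n + 1) + ∑ ℓ ∈ Finset.Icc (n - r) n, Polynomial.C (H n ℓ) * P ℓ) ∧
       -- recurrence for the type I linear forms (with `q_{-1} := 0`)
       (∀ k f, qForm r v Cm k (Polynomial.X * f)
          = (if k = 0 then 0 else qForm r v Cm (k - 1) f)
            + ∑ m ∈ Finset.Icc k (k + r), H m k * qForm r v Cm m f))) := by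
  obtain ⟨hAd, hAu, hBl, hBd, hfac⟩ := hGB
  constructor
  · -- existence and uniqueness of H
    refine ⟨Hd A, Hd_spec A hAd, fun H' h' => ?_⟩
    funext n ℓ
    have := tri_kill A hAd (fun k => H' k ℓ - Hd A k ℓ) (fun m => by
      simp only [mul_sub, Finset.sum_sub_distrib, h' m ℓ, Hd_spec A hAd m ℓ, sub_self]) n
    have h0 : H' n ℓ - Hd A n ℓ = 0 := this
    exact sub_eq_zero.mp h0
  · intro H hH
    -- moment shift
    have hshift : ∀ n ℓ, momentMatrix r v (n + 1) ℓ = momentMatrix r v n (ℓ + r) := by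
      intro n ℓ
      unfold momentMatrix
      rw [Nat.add_mod_right, Nat.add_div_right ℓ hr]
      congr 2
      omega
    -- extended factorisations
    have hABn : ∀ N s ℓ, s ≤ N →
        ∑ k ∈ Finset.range (N + 1), A s k * B k ℓ = momentMatrix r v s ℓ := by
      intro N s ℓ hs
      rw [hfac s ℓ]
      exact (Finset.sum_subset (by intro x hx; simp only [Finset.mem_range] at *; omega)
        (fun k hk hk' => by
          rw [hAu s k (by simp only [Finset.mem_range] at hk hk'; omega), zero_mul])).symm
    have hABl : ∀ s ℓ, ∑ k ∈ Finset.range (ℓ + 1), A s k * B k ℓ = momentMatrix r v s ℓ := by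
      intro s ℓ
      have h1 : ∑ k ∈ Finset.range (ℓ + 1), A s k * B k ℓ
          = ∑ k ∈ Finset.range (max s ℓ + 1), A s k * B k ℓ := by
        refine Finset.sum_subset (by intro x hx; simp only [Finset.mem_range] at *; omega) ?_
        intro k hk hk'
        rw [hBl k ℓ (by simp only [Finset.mem_range] at hk hk'; omega), mul_zero]
      rw [h1, hABn (max s ℓ) s ℓ (le_max_left _ _)]
    -- upper bandedness
    have hup : ∀ n ℓ, n + 1 < ℓ → H n ℓ = 0 := by
      intro n
      induction n using Nat.strong_induction_on with
      | _ n ih =>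
        intro ℓ hℓ
        have h1 := hH n ℓ
        rw [Finset.sum_range_succ, hAd n, one_mul] at h1
        have h2 : ∑ k ∈ Finset.range n, A n k * H k ℓ = 0 :=
          Finset.sum_eq_zero fun k hk => by
            rw [ih k (Finset.mem_range.mp hk) ℓ (by have := Finset.mem_range.mp hk; omega),
              mul_zero]
        rw [h2, zero_add] at h1
        rw [h1]
        exact hAu (n + 1) ℓ hℓ
    -- unit superdiagonal
    have hdiag : ∀ n, H n (n + 1) = 1 := by
      intro n
      have h1 := hH n (n + 1)
      rw [Finset.sum_range_succ, hAd n, one_mul] at h1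
      have h2 : ∑ k ∈ Finset.range n, A n k * H k (n + 1) = 0 :=
        Finset.sum_eq_zero fun k hk => by
          rw [hup k (n + 1) (by have := Finset.mem_range.mp hk; omega), mul_zero]
      rw [h2, zero_add] at h1
      rw [h1, hAd]
    -- H B = B shifted
    have hHB : ∀ n ℓ, ∑ k ∈ Finset.range (ℓ + 1), H n k * B k ℓ = B n (ℓ + r) := by
      intro n ℓ
      have key := tri_kill A hAd
        (fun k => (∑ j ∈ Finset.range (ℓ + 1), H k j * B j ℓ) - B k (ℓ + r)) ?_ n
      · exact sub_eq_zero.mp key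
      intro s
      have e1 : ∑ k ∈ Finset.range (s + 1),
            A s k * ((∑ j ∈ Finset.range (ℓ + 1), H k j * B j ℓ) - B k (ℓ + r))
          = (∑ j ∈ Finset.range (ℓ + 1), A (s + 1) j * B j ℓ)
            - ∑ k ∈ Finset.range (s + 1), A s k * B k (ℓ + r) := by
        simp only [mul_sub, Finset.sum_sub_distrib]
        congr 1
        calc ∑ k ∈ Finset.range (s + 1), A s k * ∑ j ∈ Finset.range (ℓ + 1), H k j * B j ℓ
            = ∑ k ∈ Finset.range (s + 1), ∑ j ∈ Finset.range (ℓ + 1),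
                A s k * H k j * B j ℓ := by
              refine Finset.sum_congr rfl fun k _ => ?_
              rw [Finset.mul_sum]
              exact Finset.sum_congr rfl fun j _ => by ring
          _ = ∑ j ∈ Finset.range (ℓ + 1), ∑ k ∈ Finset.range (s + 1),
                A s k * H k j * B j ℓ := Finset.sum_comm
          _ = ∑ j ∈ Finset.range (ℓ + 1), A (s + 1) j * B j ℓ := by
              refine Finset.sum_congr rfl fun j _ => ?_
              rw [← Finset.sum_mul, hH s j]
      rw [e1, hABl (s + 1) ℓ, hABn s s (ℓ + r) le_rfl, hshift s ℓ, sub_self]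
    -- lower bandedness
    have hlow : ∀ n ℓ, ℓ + r < n → H n ℓ = 0 := by
      intro n ℓ
      induction ℓ using Nat.strong_induction_on with
      | _ ℓ ih =>
        intro hℓ
        have h1 := hHB n ℓ
        rw [Finset.sum_range_succ] at h1
        have h2 : ∑ k ∈ Finset.range ℓ, H n k * B k ℓ = 0 :=
          Finset.sum_eq_zero fun k hk => by
            rw [ih k (Finset.mem_range.mp hk) (by have := Finset.mem_range.mp hk; omega),
              zero_mul]
        rw [h2, zero_add, hBl n (ℓ + r) hℓ] at h1
        exact (mul_eq_zero.mp h1).resolve_right (hBd ℓ)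
    -- recurrence for P, full form
    have hXP : ∀ n, Polynomial.X * P n
        = ∑ ℓ ∈ Finset.range (n + 2), Polynomial.C (H n ℓ) * P ℓ := by
      intro n
      induction n using Nat.strong_induction_on with
      | _ n ih =>
        have e1 : ∑ k ∈ Finset.range (n + 1), Polynomial.C (A n k) * (Polynomial.X * P k)
            = ∑ ℓ ∈ Finset.range (n + 2), Polynomial.C (A (n + 1) ℓ) * P ℓ := by
          have h1 : ∑ k ∈ Finset.range (n + 1), Polynomial.C (A n k) * (Polynomial.X * P k)
              = Polynomial.X * ∑ k ∈ Finset.range (n + 1), Polynomial.C (A n k) * P k := by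
            rw [Finset.mul_sum]
            exact Finset.sum_congr rfl fun k _ => by ring
          rw [h1, ← hP n, ← hP (n + 1)]
          ring
        have e2 : ∑ ℓ ∈ Finset.range (n + 2), Polynomial.C (A (n + 1) ℓ) * P ℓ
            = ∑ k ∈ Finset.range (n + 1), Polynomial.C (A n k)
                * ∑ ℓ ∈ Finset.range (n + 2), Polynomial.C (H k ℓ) * P ℓ := by
          calc ∑ ℓ ∈ Finset.range (n + 2), Polynomial.C (A (n + 1) ℓ) * P ℓ
              = ∑ ℓ ∈ Finset.range (n + 2), ∑ k ∈ Finset.range (n + 1),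
                  Polynomial.C (A n k) * (Polynomial.C (H k ℓ) * P ℓ) := by
                refine Finset.sum_congr rfl fun ℓ _ => ?_
                rw [← hH n ℓ, map_sum Polynomial.C, Finset.sum_mul]
                exact Finset.sum_congr rfl fun k _ => by rw [Polynomial.C_mul]; ring
            _ = ∑ k ∈ Finset.range (n + 1), ∑ ℓ ∈ Finset.range (n + 2),
                  Polynomial.C (A n k) * (Polynomial.C (H k ℓ) * P ℓ) := Finset.sum_comm
            _ = ∑ k ∈ Finset.range (n + 1), Polynomial.C (A n k)
                  * ∑ ℓ ∈ Finset.range (n + 2), Polynomial.C (H k ℓ) * P ℓ := by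
                exact Finset.sum_congr rfl fun k _ => (Finset.mul_sum _ _ _).symm
        have e3 : ∀ k, k < n → Polynomial.X * P k
            = ∑ ℓ ∈ Finset.range (n + 2), Polynomial.C (H k ℓ) * P ℓ := by
          intro k hk
          rw [ih k hk]
          refine Finset.sum_subset (by intro x hx; simp only [Finset.mem_range] at *; omega) ?_
          intro ℓ hℓ hℓ'
          rw [hup k ℓ (by simp only [Finset.mem_range] at hℓ hℓ'; omega), map_zero, zero_mul]
        have e4 := e1.trans e2
        rw [Finset.sum_range_succ, Finset.sum_range_succ
          (fun k => Polynomial.C (A n k)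
            * ∑ ℓ ∈ Finset.range (n + 2), Polynomial.C (H k ℓ) * P ℓ)] at e4
        have e5 : ∑ k ∈ Finset.range n, Polynomial.C (A n k) * (Polynomial.X * P k)
            = ∑ k ∈ Finset.range n, Polynomial.C (A n k)
                * ∑ ℓ ∈ Finset.range (n + 2), Polynomial.C (H k ℓ) * P ℓ :=
          Finset.sum_congr rfl fun k hk => by rw [e3 k (Finset.mem_range.mp hk)]
        rw [e5, hAd n, map_one, one_mul, one_mul] at e4
        exact add_left_cancel e4
    -- stated recurrence for P
    have hPrec : ∀ n, Polynomial.X * P n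
        = P (n + 1) + ∑ ℓ ∈ Finset.Icc (n - r) n, Polynomial.C (H n ℓ) * P ℓ := by
      intro n
      rw [hXP n, Finset.sum_range_succ, hdiag n, map_one, one_mul, add_comm]
      congr 1
      symm
      refine Finset.sum_subset
        (by intro x hx; simp only [Finset.mem_Icc, Finset.mem_range] at *; omega) ?_
      intro ℓ hℓ hℓ'
      rw [hlow n ℓ (by simp only [Finset.mem_Icc, Finset.mem_range] at hℓ hℓ'; omega),
        map_zero, zero_mul]
    -- q on monomials
    have hq : ∀ n s, qForm r v Cm n (Polynomial.X ^ s) = A s n := by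
      intro n s
      have step1 : qForm r v Cm n (Polynomial.X ^ s)
          = ∑ ℓ ∈ Finset.range (n + 1), momentMatrix r v s ℓ * Cm ℓ n := by
        unfold qForm Cpoly
        have hv : ∀ j ∈ Finset.range r,
            v j ((∑ m ∈ (Finset.range (n + 1)).filter (fun m => r * m + j ≤ n),
              Polynomial.C (Cm (r * m + j) n) * Polynomial.X ^ m) * Polynomial.X ^ s)
            = ∑ m ∈ (Finset.range (n + 1)).filter (fun m => r * m + j ≤ n),
                Cm (r * m + j) n * v j (Polynomial.X ^ (m + s)) := by
          intro j _
          rw [Finset.sum_mul, map_sum]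
          refine Finset.sum_congr rfl fun m _ => ?_
          rw [mul_assoc, ← pow_add, ← Polynomial.smul_eq_C_mul, map_smul, smul_eq_mul]
        rw [Finset.sum_congr rfl hv, Finset.sum_sigma']
        refine Finset.sum_nbij' (i := fun p => r * p.2 + p.1) (j := fun ℓ => ⟨ℓ % r, ℓ / r⟩)
          ?_ ?_ ?_ ?_ ?_
        · rintro ⟨j, m⟩ hp
          simp only [Finset.mem_sigma, Finset.mem_range, Finset.mem_filter] at hp ⊢
          omega
        · intro ℓ hℓ
          simp only [Finset.mem_range] at hℓ
          simp only [Finset.mem_sigma, Finset.mem_range, Finset.mem_filter]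
          have h1 : ℓ % r < r := Nat.mod_lt _ hr
          have h2 : r * (ℓ / r) + ℓ % r = ℓ := Nat.div_add_mod ℓ r
          have h3 : ℓ / r ≤ ℓ := Nat.div_le_self ℓ r
          exact ⟨h1, by omega, by omega⟩
        · rintro ⟨j, m⟩ hp
          simp only [Finset.mem_sigma, Finset.mem_range, Finset.mem_filter] at hp
          have h1 : (r * m + j) % r = j := by
            rw [Nat.mul_add_mod, Nat.mod_eq_of_lt hp.1]
          have h2 : (r * m + j) / r = m := by
            rw [Nat.mul_add_div (by omega : 0 < r), Nat.div_eq_of_lt hp.1]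
            omega
          simp only [h1, h2]
        · intro ℓ _
          exact Nat.div_add_mod ℓ r
        · rintro ⟨j, m⟩ hp
          simp only [Finset.mem_sigma, Finset.mem_range, Finset.mem_filter] at hp
          have h1 : (r * m + j) % r = j := by
            rw [Nat.mul_add_mod, Nat.mod_eq_of_lt hp.1]
          have h2 : (r * m + j) / r = m := by
            rw [Nat.mul_add_div (by omega : 0 < r), Nat.div_eq_of_lt hp.1]
            omega
          simp only [momentMatrix, h1, h2]
          rw [mul_comm]
      have inner : ∀ k, ∑ ℓ ∈ Finset.range (n + 1), B k ℓ * Cm ℓ n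
          = if k = n then 1 else 0 := by
        intro k
        rw [← hCinv k n]
        exact (Finset.sum_subset
          (by intro x hx; simp only [Finset.mem_Icc, Finset.mem_range] at *; omega)
          (fun ℓ hℓ hℓ' => by
            rw [hBl k ℓ (by simp only [Finset.mem_Icc, Finset.mem_range] at hℓ hℓ'; omega),
              zero_mul])).symm
      rw [step1]
      calc ∑ ℓ ∈ Finset.range (n + 1), momentMatrix r v s ℓ * Cm ℓ n
          = ∑ ℓ ∈ Finset.range (n + 1), ∑ k ∈ Finset.range (s + 1),
              A s k * B k ℓ * Cm ℓ n := by
            exact Finset.sum_congr rfl fun ℓ _ => by rw [hfac s ℓ, Finset.sum_mul]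
        _ = ∑ k ∈ Finset.range (s + 1), A s k
              * ∑ ℓ ∈ Finset.range (n + 1), B k ℓ * Cm ℓ n := by
            rw [Finset.sum_comm]
            refine Finset.sum_congr rfl fun k _ => ?_
            rw [Finset.mul_sum]
            exact Finset.sum_congr rfl fun ℓ _ => by ring
        _ = ∑ k ∈ Finset.range (s + 1), A s k * (if k = n then 1 else 0) :=
            Finset.sum_congr rfl fun k _ => by rw [inner k]
        _ = if n ∈ Finset.range (s + 1) then A s n else 0 := by
            simp only [mul_ite, mul_one, mul_zero, Finset.sum_ite_eq']
        _ = A s n := by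
            split_ifs with h
            · rfl
            · exact (hAu s n (by simp only [Finset.mem_range] at h; omega)).symm
    -- scalar recurrence for A columns
    have hArec : ∀ s k, A (s + 1) k
        = (if k = 0 then 0 else A s (k - 1)) + ∑ m ∈ Finset.Icc k (k + r), H m k * A s m := by
      intro s k
      have base : ∑ m ∈ Finset.range (s + k + r + 2), A s m * H m k = A (s + 1) k := by
        rw [← hH s k]
        exact (Finset.sum_subset (by intro x hx; simp only [Finset.mem_range] at *; omega)
          (fun m hm hm' => by
            rw [hAu s m (by simp only [Finset.mem_range] at hm hm'; omega), zero_mul])).symm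
      rw [← base]
      rcases Nat.eq_zero_or_pos k with hk | hk
      · subst hk
        rw [if_pos rfl, zero_add]
        calc ∑ m ∈ Finset.range (s + 0 + r + 2), A s m * H m 0
            = ∑ m ∈ Finset.Icc 0 (0 + r), A s m * H m 0 :=
              (Finset.sum_subset
                (by intro x hx; simp only [Finset.mem_Icc, Finset.mem_range] at *; omega)
                (fun m hm hm' => by
                  rw [hlow m 0 (by
                    simp only [Finset.mem_Icc, Finset.mem_range] at hm hm'; omega),
                    mul_zero])).symm
          _ = ∑ m ∈ Finset.Icc 0 (0 + r), H m 0 * A s m :=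
              Finset.sum_congr rfl fun m _ => mul_comm _ _
      · obtain ⟨k', rfl⟩ : ∃ k', k = k' + 1 := ⟨k - 1, by omega⟩
        rw [if_neg (by omega)]
        have hsub : ∑ m ∈ Finset.range (s + (k' + 1) + r + 2), A s m * H m (k' + 1)
            = ∑ m ∈ Finset.Icc k' (k' + 1 + r), A s m * H m (k' + 1) :=
          (Finset.sum_subset
            (by intro x hx; simp only [Finset.mem_Icc, Finset.mem_range] at *; omega)
            (fun m hm hm' => by
              simp only [Finset.mem_Icc, Finset.mem_range] at hm hm'
              rcases Nat.lt_or_ge m k' with h | h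
              · rw [hup m (k' + 1) (by omega), mul_zero]
              · rw [hlow m (k' + 1) (by omega), mul_zero])).symm
        rw [hsub, show Finset.Icc k' (k' + 1 + r) = insert k' (Finset.Icc (k' + 1) (k' + 1 + r))
          from by ext x; simp only [Finset.mem_Icc, Finset.mem_insert]; omega,
          Finset.sum_insert (by simp only [Finset.mem_Icc]; omega), hdiag k', mul_one]
        simp only [Nat.add_sub_cancel]
        congr 1
        exact Finset.sum_congr rfl fun m _ => mul_comm _ _
    -- qForm linearity
    have hqadd : ∀ n f g, qForm r v Cm n (f + g) = qForm r v Cm n f + qForm r v Cm n g := by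
      intro n f g
      unfold qForm
      rw [← Finset.sum_add_distrib]
      exact Finset.sum_congr rfl fun j _ => by rw [mul_add, map_add]
    have hqsmul : ∀ n (a : ℂ) f, qForm r v Cm n (a • f) = a * qForm r v Cm n f := by
      intro n a f
      unfold qForm
      rw [Finset.mul_sum]
      exact Finset.sum_congr rfl fun j _ => by rw [mul_smul_comm, map_smul, smul_eq_mul]
    -- q recurrence on monomials
    have hmono : ∀ k s (a : ℂ),
        qForm r v Cm k (Polynomial.X * (Polynomial.C a * Polynomial.X ^ s))
          = (if k = 0 then 0 else qForm r v Cm (k - 1) (Polynomial.C a * Polynomial.X ^ s))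
            + ∑ m ∈ Finset.Icc k (k + r),
                H m k * qForm r v Cm m (Polynomial.C a * Polynomial.X ^ s) := by
      intro k s a
      have hCa : ∀ t : ℕ, (Polynomial.C a : Polynomial ℂ) * Polynomial.X ^ t
          = a • Polynomial.X ^ t := fun t => (Polynomial.smul_eq_C_mul a).symm
      have hX : Polynomial.X * (Polynomial.C a * Polynomial.X ^ s)
          = a • Polynomial.X ^ (s + 1) := by
        rw [hCa, mul_smul_comm, ← pow_succ']
      rw [hX, hqsmul, hq]
      simp only [hCa, hqsmul, hq]
      rw [hArec s k, mul_add, Finset.mul_sum]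
      congr 1
      · split_ifs <;> simp [mul_comm]
      · exact Finset.sum_congr rfl fun m _ => by ring
    -- final q recurrence
    have hqrec : ∀ k f, qForm r v Cm k (Polynomial.X * f)
        = (if k = 0 then 0 else qForm r v Cm (k - 1) f)
          + ∑ m ∈ Finset.Icc k (k + r), H m k * qForm r v Cm m f := by
      intro k f
      induction f using Polynomial.induction_on with
      | C a => simpa using hmono k 0 a
      | add p q hp hq' =>
          rw [mul_add, hqadd, hp, hq']
          simp only [hqadd, mul_add, Finset.sum_add_distrib]
          split_ifs <;> ring
      | monomial s a _ => exact hmono k (s + 1) a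
    exact ⟨hHB, hdiag, hup, hlow, hPrec, hqrec⟩

end
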